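/- arXiv:math/0610717 — 3 statements merged into one kernel-verified Lean document; each statement's English description precedes it below -/
import Mathlib

section
/- For every real number α and every real constant c ≥ 1/√5, there exist infinitely many pairs of integers (a, b) with b > 0 satisfying |α − a/b| < c/b². Precisely: for every natural number N there exist integers a and b with b > N such that |α − a/b| < c/b². -/
private lemma sqrt5_irr : Irrational (Real.sqrt 5) := by
  have := Nat.Prime.irrational_sqrt (p := 5) (by norm_num)
  simpa using this

private lemma sqrt5_pos : 0 < Real.sqrt 5 := Real.sqrt_pos.mpr (by norm_num)

private lemma sqrt5_sq : Real.sqrt 5 * Real.sqrt 5 = 5 :=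
  Real.mul_self_sqrt (by norm_num)

/-- If `a² + b² ≤ √5 a b` for nonzero integers, the inequality is strict. -/
private lemma strict_of_le (a b : ℤ) (ha : a ≠ 0) (hb : b ≠ 0)
    (h : ((a : ℝ)^2 + (b : ℝ)^2) ≤ Real.sqrt 5 * (a * b)) :
    ((a : ℝ)^2 + (b : ℝ)^2) < Real.sqrt 5 * (a * b) := by
  rcases lt_or_eq_of_le h with h' | h'
  · exact h'
  · exfalso
    have hab : (a : ℝ) * b ≠ 0 := by
      simp [ha, hb]
    have : Real.sqrt 5 = (((a^2 + b^2 : ℤ) : ℚ) / ((a * b : ℤ) : ℚ) : ℚ) := by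
      push_cast
      field_simp
      push_cast at h'
      linarith
    exact sqrt5_irr ⟨_, this.symm⟩

/-- Key numeric contradiction. -/
private lemma key_contra (q s : ℤ) (hq : 0 < q) (hs : 0 < s)
    (h1 : ((q : ℝ)^2 + (s : ℝ)^2) ≤ Real.sqrt 5 * (q * s))
    (h2 : ((s : ℝ)^2 + ((q : ℝ) + s)^2) ≤ Real.sqrt 5 * (s * ((q : ℝ) + s))) : False := by
  have h1' := strict_of_le q s hq.ne' hs.ne' h1
  have h2' : ((s : ℝ)^2 + ((q + s : ℤ) : ℝ)^2) < Real.sqrt 5 * (s * ((q + s : ℤ) : ℝ)) := by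
    have := strict_of_le s (q + s) hs.ne' (by positivity)
      (by push_cast; linarith)
    push_cast at this ⊢
    linarith
  push_cast at h2'
  have hr := sqrt5_sq
  have hrp := sqrt5_pos
  have hq' : (1 : ℝ) ≤ (q : ℝ) := by exact_mod_cast hq
  have hs' : (1 : ℝ) ≤ (s : ℝ) := by exact_mod_cast hs
  have hr2 : Real.sqrt 5 * Real.sqrt 5 * (s : ℝ)^2 = 5 * (s : ℝ)^2 := by rw [hr]
  have hA2 : (2*(q:ℝ) - Real.sqrt 5 * s)^2 < (s:ℝ)^2 := by nlinarith [h1', hr2]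
  have hB2 : (2*((q:ℝ)+s) - Real.sqrt 5 * s)^2 < (s:ℝ)^2 := by nlinarith [h2', hr2]
  have hA : -(s:ℝ) < 2*(q:ℝ) - Real.sqrt 5 * s := by nlinarith [hA2, hs']
  have hB : 2*((q:ℝ)+s) - Real.sqrt 5 * s < (s:ℝ) := by nlinarith [hB2, hs']
  linarith

/-- Farey neighbours of an irrational with large denominator sum. -/
private lemma farey (α : ℝ) (hα : Irrational α) (n : ℕ) :
    ∃ p q r s : ℤ, 0 < q ∧ 0 < s ∧ q * r - p * s = 1 ∧
      (p : ℝ) / q < α ∧ α < (r : ℝ) / s ∧ (n : ℤ) < q + s := by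
  induction n with
  | zero =>
    refine ⟨⌊α⌋, 1, ⌊α⌋ + 1, 1, one_pos, one_pos, by ring, ?_, ?_, by norm_num⟩
    · have h := Int.floor_le α
      have hne : (⌊α⌋ : ℝ) ≠ α := (hα.ne_int ⌊α⌋).symm
      simpa using lt_of_le_of_ne h hne
    · simpa using Int.lt_floor_add_one α
  | succ n ih =>
    obtain ⟨p, q, r, s, hq, hs, hdet, hl, hr, hsum⟩ := ih
    rcases lt_or_ge (n + 1 : ℤ) (q + s) with h | h
    · exact ⟨p, q, r, s, hq, hs, hdet, hl, hr, by exact_mod_cast h⟩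
    · -- q + s = n + 1; split at the mediant
      have hqs : (0 : ℤ) < q + s := by linarith
      have hqsR : (0 : ℝ) < (q : ℝ) + s := by
        have : ((0:ℤ) : ℝ) < ((q + s : ℤ) : ℝ) := by exact_mod_cast hqs
        push_cast at this; linarith
      have hmne : α ≠ ((p + r : ℤ) : ℝ) / ((q + s : ℤ) : ℝ) := by
        intro hEq
        exact hα ⟨((p + r : ℤ) : ℚ) / ((q + s : ℤ) : ℚ), by push_cast at hEq ⊢; linarith⟩
      rcases lt_or_gt_of_ne hmne with hlt | hgt
      · -- α < mediant : take (p, q, p+r, q+s)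
        refine ⟨p, q, p + r, q + s, hq, hqs, by linarith [hdet], hl, ?_, ?_⟩
        · push_cast at hlt ⊢; exact hlt
        · push_cast; push_cast at hsum
          have : (1 : ℤ) ≤ q := hq
          push_cast at this
          linarith
      · -- mediant < α : take (p+r, q+s, r, s)
        refine ⟨p + r, q + s, r, s, hqs, hs, by linarith [hdet], ?_, hr, ?_⟩
        · push_cast at hgt ⊢; exact hgt
        · push_cast; push_cast at hsum
          have : (1 : ℤ) ≤ s := hs
          push_cast at this
          linarith

/-- round is the nearest integer. -/
private lemma round_nearest (x : ℝ) (a : ℤ) : |x - round x| ≤ |x - a| := by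
  rw [abs_sub_round_eq_min]
  have hf : Int.fract x = x - ⌊x⌋ := (Int.self_sub_floor x).symm
  rcases le_or_gt (a : ℝ) (⌊x⌋ : ℝ) with h | h
  · have h1 : Int.fract x ≤ x - a := by rw [hf]; linarith
    exact le_trans (min_le_left _ _) (h1.trans (le_abs_self _))
  · have ha : (⌊x⌋ : ℝ) + 1 ≤ a := by
      have : ⌊x⌋ < a := by exact_mod_cast h
      exact_mod_cast this
    have h1 : 1 - Int.fract x ≤ a - x := by rw [hf]; linarith
    exact le_trans (min_le_right _ _) (h1.trans (by rw [abs_sub_comm]; exact le_abs_self _))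

/-- An irrational is uniformly bounded away from rationals with bounded denominator. -/
private lemma bdd_away (α : ℝ) (hα : Irrational α) (N : ℕ) :
    ∃ δ : ℝ, 0 < δ ∧ ∀ a b : ℤ, 0 < b → b ≤ (N : ℤ) → δ ≤ |α - (a : ℝ) / b| := by
  induction N with
  | zero => exact ⟨1, one_pos, fun a b hb hb' => absurd (lt_of_lt_of_le hb hb') (by norm_num)⟩
  | succ N ih =>
    obtain ⟨δ, hδ, hδ'⟩ := ih
    have hMR : (0 : ℝ) < (N : ℝ) + 1 := by positivity
    set x : ℝ := ((N : ℝ) + 1) * α with hx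
    have hxirr : Irrational x := by
      have hq0 : ((N : ℚ) + 1) ≠ 0 := by positivity
      have := hα.ratCast_mul hq0
      convert this using 2
      push_cast
      ring
    have hd : 0 < |x - round x| := by
      rw [abs_pos, sub_ne_zero]
      exact fun hEq => hxirr ⟨(round x : ℚ), by push_cast; exact hEq.symm⟩
    refine ⟨min δ (|x - round x| / ((N : ℝ) + 1)), lt_min hδ (by positivity),
      fun a b hb hbN => ?_⟩
    rcases lt_or_ge b ((N : ℤ) + 1) with h | h
    · exact le_trans (min_le_left _ _) (hδ' a b hb (by omega))
    · have hbM : b = (N : ℤ) + 1 := le_antisymm (by exact_mod_cast hbN) h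
      have hbR : ((b : ℤ) : ℝ) = (N : ℝ) + 1 := by rw [hbM]; push_cast; ring
      have hbpos : (0 : ℝ) < (b : ℝ) := by rw [hbR]; positivity
      have heq : |α - (a : ℝ) / b| = |x - a| / ((N : ℝ) + 1) := by
        rw [hx, ← hbR, show α - (a : ℝ) / b = ((b : ℝ) * α - a) / (b : ℝ) by
          field_simp, abs_div, abs_of_pos hbpos]
      rw [heq]
      exact le_trans (min_le_right _ _) ((div_le_div_iff_of_pos_right hMR).mpr (round_nearest x a))

private lemma collect (u v : ℝ) (hu : 0 < u) (hv : 0 < v)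
    (h : 1 / Real.sqrt 5 / u ^ 2 + 1 / Real.sqrt 5 / v ^ 2 ≤ 1 / (u * v)) :
    u ^ 2 + v ^ 2 ≤ Real.sqrt 5 * (u * v) := by
  have h5 := sqrt5_pos
  have hsq := sqrt5_sq
  have hu' := hu.ne'
  have hv' := hv.ne'
  have h5' := sqrt5_pos.ne'
  rw [div_add_div _ _ (by positivity : (u:ℝ)^2 ≠ 0) (by positivity : (v:ℝ)^2 ≠ 0),
    div_le_div_iff₀ (by positivity) (by positivity)] at h
  have h' := mul_le_mul_of_nonneg_left h h5.le
  have e : Real.sqrt 5 * ((1 / Real.sqrt 5 * v ^ 2 + u ^ 2 * (1 / Real.sqrt 5)) * (u * v))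
      = (u ^ 2 + v ^ 2) * (u * v) := by
    field_simp
    ring
  rw [e] at h'
  exact le_of_mul_le_mul_right (by nlinarith [h']) (mul_pos hu hv)

/-- Hurwitz for irrationals. -/
private lemma hurwitz_irrational (α : ℝ) (hα : Irrational α) (N : ℕ) :
    ∃ a b : ℤ, (N : ℤ) < b ∧ |α - (a : ℝ) / b| < 1 / Real.sqrt 5 / (b : ℝ) ^ 2 := by
  obtain ⟨δ, hδ, hδ'⟩ := bdd_away α hα N
  obtain ⟨n, hn⟩ := exists_nat_gt (1 / δ)
  obtain ⟨p, q, r, s, hq, hs, hdet, hl, hr, hsum⟩ := farey α hα n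
  have hqR : (0 : ℝ) < (q : ℝ) := by exact_mod_cast hq
  have hsR : (0 : ℝ) < (s : ℝ) := by exact_mod_cast hs
  have hqsR : (0 : ℝ) < (q : ℝ) + s := by linarith
  have h1 : (r : ℝ) * q - (s : ℝ) * p = 1 := by
    have : ((q * r - p * s : ℤ) : ℝ) = 1 := by rw [hdet]; norm_num
    push_cast at this
    linarith
  -- the gap
  have hgap : (r : ℝ) / s - (p : ℝ) / q = 1 / ((q : ℝ) * s) := by
    rw [div_sub_div _ _ hsR.ne' hqR.ne', h1, mul_comm]
  have hqs_ge : (n : ℝ) ≤ (q : ℝ) * s := by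
    have : (n : ℤ) ≤ q * s := by nlinarith
    exact_mod_cast this
  have hgap_lt : (r : ℝ) / s - (p : ℝ) / q < δ := by
    rw [hgap]
    have hnpos : (0 : ℝ) < n := lt_of_le_of_lt (by positivity) hn
    have h2 : 1 / ((q : ℝ) * s) ≤ 1 / (n : ℝ) := one_div_le_one_div_of_le hnpos hqs_ge
    have h3 : 1 / (n : ℝ) < δ := by
      rw [div_lt_iff₀ hnpos]
      rw [div_lt_iff₀ hδ] at hn
      linarith
    linarith
  have hps : (p : ℝ) * s < (r : ℝ) * q := by
    have := (div_lt_div_iff₀ hqR hsR).mp (hl.trans hr)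
    linarith
  have hmed_lb : (p : ℝ) / q < ((p : ℝ) + r) / ((q : ℝ) + s) := by
    rw [div_lt_div_iff₀ hqR hqsR]
    nlinarith
  have hmed_ub : ((p : ℝ) + r) / ((q : ℝ) + s) < (r : ℝ) / s := by
    rw [div_lt_div_iff₀ hqsR hsR]
    nlinarith
  have hden : ∀ (a b : ℤ), 0 < b → |α - (a : ℝ) / b| < δ → (N : ℤ) < b := by
    intro a b hb habs
    by_contra hcon
    push_neg at hcon
    exact absurd (hδ' a b hb hcon) (not_le.mpr habs)
  by_contra hcon
  push_neg at hcon
  have fail : ∀ (a b : ℤ), 0 < b → |α - (a : ℝ) / b| < δ →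
      1 / Real.sqrt 5 / (b : ℝ) ^ 2 ≤ |α - (a : ℝ) / b| := by
    intro a b hb habs
    exact hcon a b (hden a b hb habs)
  have hd1 : |α - (p : ℝ) / q| < δ := by
    rw [abs_of_pos (by linarith)]
    linarith
  have hd2 : |α - (r : ℝ) / s| < δ := by
    rw [abs_of_neg (by linarith)]
    linarith
  have hd3 : |α - ((p + r : ℤ) : ℝ) / ((q + s : ℤ) : ℝ)| < δ := by
    push_cast
    rcases le_or_gt α (((p : ℝ) + r) / ((q : ℝ) + s)) with h | h
    · rw [abs_of_nonpos (by linarith)]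
      linarith
    · rw [abs_of_pos (by linarith)]
      linarith
  have f1 := fail p q hq hd1
  have f2 := fail r s hs hd2
  have f3 := fail (p + r) (q + s) (by linarith) hd3
  rw [abs_of_pos (by linarith)] at f1
  rw [abs_of_neg (by linarith)] at f2
  push_cast at f3
  have key1 : (q : ℝ) ^ 2 + (s : ℝ) ^ 2 ≤ Real.sqrt 5 * ((q : ℝ) * s) := by
    refine collect _ _ hqR hsR ?_
    rw [← hgap]
    linarith
  rcases le_or_gt α (((p : ℝ) + r) / ((q : ℝ) + s)) with hmc | hmc
  · -- α ≤ mediant: combine with p/q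
    rw [abs_of_nonpos (by linarith)] at f3
    have hgapm : ((p : ℝ) + r) / ((q : ℝ) + s) - (p : ℝ) / q = 1 / ((q : ℝ) * ((q : ℝ) + s)) := by
      rw [div_sub_div _ _ hqsR.ne' hqR.ne',
        show ((p : ℝ) + r) * q - ((q : ℝ) + s) * p = 1 by linear_combination h1, mul_comm]
    have key2 : (q : ℝ) ^ 2 + ((q : ℝ) + s) ^ 2 ≤ Real.sqrt 5 * ((q : ℝ) * ((q : ℝ) + s)) := by
      refine collect _ _ hqR hqsR ?_
      rw [← hgapm]
      linarith
    exact key_contra s q hs hq (by linarith [key1]) (by linarith [key2])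
  · -- mediant < α: combine with r/s
    rw [abs_of_pos (by linarith)] at f3
    have hgapm : (r : ℝ) / s - ((p : ℝ) + r) / ((q : ℝ) + s) = 1 / ((s : ℝ) * ((q : ℝ) + s)) := by
      rw [div_sub_div _ _ hsR.ne' hqsR.ne',
        show (r : ℝ) * ((q : ℝ) + s) - (s : ℝ) * ((p : ℝ) + r) = 1 by linear_combination h1]
    have key2 : (s : ℝ) ^ 2 + ((q : ℝ) + s) ^ 2 ≤ Real.sqrt 5 * ((s : ℝ) * ((q : ℝ) + s)) := by
      refine collect _ _ hsR hqsR ?_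
      rw [← hgapm]
      linarith
    exact key_contra q s hq hs key1 key2

/-- Hurwitz's theorem, part I: for any real `α` and any `c ≥ 1/√5`, there are
infinitely many integer pairs `(a, b)` with `b > 0` and `|α - a/b| < c/b²`. -/
theorem hurwitz_part_I (α c : ℝ) (hc : c ≥ 1 / Real.sqrt 5) :
    ∀ N : ℕ, ∃ a b : ℤ, (N : ℤ) < b ∧ |α - (a : ℝ) / (b : ℝ)| < c / (b : ℝ) ^ 2 := by
  intro N
  have hcpos : 0 < c := lt_of_lt_of_le (by positivity) hc
  by_cases hα : Irrational α
  · obtain ⟨a, b, hb, habs⟩ := hurwitz_irrational α hα N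
    refine ⟨a, b, hb, lt_of_lt_of_le habs ?_⟩
    have hbR : (0 : ℝ) < (b : ℝ) := by
      have : (0 : ℤ) < b := lt_of_le_of_lt (Int.ofNat_nonneg N) hb
      exact_mod_cast this
    exact div_le_div_of_nonneg_right hc (by positivity) |>.trans_eq rfl
  · rw [Irrational] at hα
    push_neg at hα
    obtain ⟨x, hx⟩ := hα
    refine ⟨x.num * (N + 1), (x.den : ℤ) * (N + 1), ?_, ?_⟩
    · have hden : (1 : ℤ) ≤ (x.den : ℤ) := by exact_mod_cast x.pos
      nlinarith
    · have hden : (0 : ℝ) < (x.den : ℝ) := by exact_mod_cast x.pos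
      have hb : (0 : ℝ) < ((x.den : ℤ) * (N + 1) : ℤ) := by positivity
      have : ((x.num * (N + 1) : ℤ) : ℝ) / (((x.den : ℤ) * (N + 1) : ℤ) : ℝ) = (x : ℝ) := by
        push_cast
        rw [mul_div_mul_right _ _ (by positivity : ((N:ℝ) + 1) ≠ 0)]
        rw [Rat.cast_def]
      rw [this, ← hx, sub_self, abs_zero]
      positivity
end

section
/- Let α = (√5 + 1)/2 be the Golden Ratio. Then for every real constant c with 0 < c < 1/√5, the inequality |α − a/b| < c/b² has only finitely many integer solutions (a, b) with b > 0. Precisely: the set of pairs of integers (a, b) with b > 0 and |α − a/b| < c/b² is finite. -/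
set_option maxHeartbeats 1000000

lemma hurwitz_aux (a b : ℤ) (hb : 0 < b) : a ^ 2 - a * b - b ^ 2 ≠ 0 := by
  intro h
  have h5 : ((2 * a - b : ℤ) : ℝ) ^ 2 = 5 * ((b : ℤ) : ℝ) ^ 2 := by
    have : (2 * a - b) ^ 2 = 5 * b ^ 2 := by linear_combination 4 * h
    exact_mod_cast congrArg (fun x : ℤ => (x : ℝ)) this
  have hirr : Irrational (Real.sqrt 5) := by
    have : Nat.Prime 5 := by norm_num
    exact_mod_cast this.irrational_sqrt
  apply hirr
  refine ⟨(|2 * a - b| : ℤ) / (b : ℚ), ?_⟩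
  have hbR : (0 : ℝ) < (b : ℝ) := by exact_mod_cast hb
  have hsq : Real.sqrt 5 = |((2 * a - b : ℤ) : ℝ)| / (b : ℝ) := by
    rw [show (5 : ℝ) = (|((2 * a - b : ℤ) : ℝ)| / (b : ℝ)) ^ 2 by
      rw [div_pow, sq_abs, eq_div_iff (by positivity)]
      linarith [h5]]
    exact Real.sqrt_sq (by positivity)
  rw [hsq]
  push_cast
  ring

/-- Hurwitz's theorem, part II: for the Golden Ratio `α = (√5 + 1)/2` and any
`0 < c < 1/√5`, the inequality `|α - a/b| < c/b²` has only finitely many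
integer solutions `(a, b)` with `b > 0`. -/
theorem hurwitz_part_II (c : ℝ) (hc0 : 0 < c) (hc : c < 1 / Real.sqrt 5) :
    Set.Finite {p : ℤ × ℤ | 0 < p.2 ∧
      |(Real.sqrt 5 + 1) / 2 - (p.1 : ℝ) / (p.2 : ℝ)| < c / (p.2 : ℝ) ^ 2} := by
  set s := Real.sqrt 5 with hsdef
  have hs2 : s ^ 2 = 5 := Real.sq_sqrt (by norm_num)
  have hs_pos : (2 : ℝ) < s := by nlinarith [Real.sqrt_nonneg 5]
  have hcs : c * s < 1 := by
    rw [lt_div_iff₀ (by linarith)] at hc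
    linarith
  have hden : (0 : ℝ) < 1 - c * s := by linarith
  set B : ℝ := c ^ 2 / (1 - c * s) with hBdef
  have hBpos : 0 < B := by positivity
  set N : ℤ := ⌈(c + (s + 1) / 2 + 1) * B⌉ with hNdef
  have hNB : B ≤ (N : ℝ) := by
    have h1 : B ≤ (c + (s + 1) / 2 + 1) * B := by nlinarith
    exact h1.trans (Int.le_ceil _)
  have hNa : (c + (s + 1) / 2) * B ≤ (N : ℝ) := by
    have h1 : (c + (s + 1) / 2) * B ≤ (c + (s + 1) / 2 + 1) * B := by nlinarith
    exact h1.trans (Int.le_ceil _)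
  apply Set.Finite.subset (Set.finite_Icc ((-N, 1) : ℤ × ℤ) (N, N))
  rintro ⟨a, b⟩ ⟨hb, habs⟩
  simp only at hb habs
  have hbR : (0 : ℝ) < (b : ℝ) := by exact_mod_cast hb
  have hb1 : (1 : ℝ) ≤ (b : ℝ) := by exact_mod_cast hb
  set α : ℝ := (s + 1) / 2 with hαdef
  set β : ℝ := (1 - s) / 2 with hβdef
  set x : ℝ := (a : ℝ) / (b : ℝ) with hxdef
  have hD : (1 : ℝ) ≤ |((a ^ 2 - a * b - b ^ 2 : ℤ) : ℝ)| := by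
    have h1 : (1 : ℤ) ≤ |a ^ 2 - a * b - b ^ 2| := Int.one_le_abs (hurwitz_aux a b hb)
    calc (1 : ℝ) = ((1 : ℤ) : ℝ) := by norm_num
    _ ≤ ((|a ^ 2 - a * b - b ^ 2| : ℤ) : ℝ) := by exact_mod_cast h1
    _ = |((a ^ 2 - a * b - b ^ 2 : ℤ) : ℝ)| := by push_cast; ring_nf
  have hkey : ((a ^ 2 - a * b - b ^ 2 : ℤ) : ℝ) = (b : ℝ) ^ 2 * ((x - α) * (x - β)) := by
    rw [hxdef, hαdef, hβdef]
    push_cast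
    field_simp
    ring_nf
    linear_combination (b : ℝ) ^ 2 * hs2
  have habs' : |α - x| < c / (b : ℝ) ^ 2 := habs
  have htβ : |x - β| ≤ |α - x| + s := by
    have h0 : x - β = -(α - x) + (α - β) := by ring
    rw [h0]
    calc |(-(α - x) + (α - β))| ≤ |(-(α - x))| + |α - β| := abs_add_le _ _
    _ = |α - x| + |α - β| := by rw [abs_neg]
    _ = |α - x| + s := by
        congr 1
        rw [hαdef, hβdef, abs_of_pos (by linarith)]
        ring
  have hprod : (1 : ℝ) ≤ (b : ℝ) ^ 2 * (|α - x| * |x - β|) := by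
    calc (1 : ℝ) ≤ |((a ^ 2 - a * b - b ^ 2 : ℤ) : ℝ)| := hD
    _ = (b : ℝ) ^ 2 * (|α - x| * |x - β|) := by
        rw [hkey, abs_mul, abs_of_pos (by positivity : (0:ℝ) < (b:ℝ)^2)]
        congr 1
        rw [show (x - α) * (x - β) = (α - x) * -(x - β) by ring, abs_mul, abs_neg]
  have hbb : (b : ℝ) ^ 2 < B := by
    have h0 : 0 ≤ |α - x| := abs_nonneg _
    have h2 : 0 ≤ |x - β| := abs_nonneg _
    have h1 : |α - x| * |x - β| < (c / (b : ℝ) ^ 2) * (c / (b : ℝ) ^ 2 + s) := by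
      nlinarith [habs', htβ]
    have hb2 : (0 : ℝ) < (b : ℝ) ^ 2 := by positivity
    have h3 : (b : ℝ) ^ 2 * (|α - x| * |x - β|) < c ^ 2 / (b : ℝ) ^ 2 + c * s := by
      calc (b : ℝ) ^ 2 * (|α - x| * |x - β|)
          < (b : ℝ) ^ 2 * ((c / (b : ℝ) ^ 2) * (c / (b : ℝ) ^ 2 + s)) :=
            mul_lt_mul_of_pos_left h1 hb2
        _ = c ^ 2 / (b : ℝ) ^ 2 + c * s := by field_simp
    have h4 : (1 : ℝ) < c ^ 2 / (b : ℝ) ^ 2 + c * s := lt_of_le_of_lt hprod h3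
    rw [hBdef, lt_div_iff₀ hden]
    have h6 : (b : ℝ) ^ 2 * (c ^ 2 / (b : ℝ) ^ 2) = c ^ 2 := by field_simp
    nlinarith [mul_lt_mul_of_pos_left h4 hb2]
  have hbB : (b : ℝ) < B := by
    have h7 : (b : ℝ) ≤ (b : ℝ) ^ 2 := by nlinarith [hb1]
    linarith
  have hbN : b ≤ N := by
    have : (b : ℝ) ≤ (N : ℝ) := by linarith
    exact_mod_cast this
  have hcα : 0 < c + α := by rw [hαdef]; linarith
  have hax : |x| < c + α := by
    have h1 : |x| ≤ |α - x| + |α| := by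
      calc |x| = |(-(α - x)) + α| := by ring_nf
      _ ≤ |(-(α - x))| + |α| := abs_add_le _ _
      _ = |α - x| + |α| := by rw [abs_neg]
    have h2 : |α| = α := abs_of_pos (by rw [hαdef]; linarith)
    have h3 : c / (b : ℝ) ^ 2 ≤ c := by
      rw [div_le_iff₀ (by positivity)]
      have hb2 : (1 : ℝ) ≤ (b : ℝ) ^ 2 := by nlinarith [hb1]
      nlinarith [hc0, hb2]
    linarith [habs']
  have haR : |(a : ℝ)| < (c + α) * (b : ℝ) := by
    have h0 : |(a : ℝ)| = |x| * (b : ℝ) := by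
      rw [hxdef, abs_div, abs_of_pos hbR]
      field_simp
    rw [h0]
    exact mul_lt_mul_of_pos_right hax hbR
  have haB : |(a : ℝ)| < (c + α) * B :=
    haR.trans (mul_lt_mul_of_pos_left hbB hcα)
  have haN : |(a : ℝ)| ≤ (N : ℝ) := by
    exact le_of_lt (haB.trans_le hNa)
  have haN' : |a| ≤ N := by
    have h0 : ((|a| : ℤ) : ℝ) ≤ (N : ℝ) := by
      rw [Int.cast_abs]; exact haN
    exact_mod_cast h0
  obtain ⟨ha1, ha2⟩ := abs_le.mp haN'
  exact ⟨⟨ha1, hb⟩, ⟨ha2, hbN⟩⟩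
end

section
/- For every real ε > 0, for Lebesgue-almost every real number α there exists a constant c > 0 (depending on α and ε) such that the inequality |α − a/b²| < c/(b³ · (log b)^{1+ε}) has no integer solutions (a, b) with b ≥ 2. Precisely: for every ε > 0, the set of real numbers α for which such a positive constant c exists has full Lebesgue measure in ℝ. -/
open MeasureTheory
open scoped ENNReal


private lemma bertrand_summable {p : ℝ} (hp : 1 < p) :
    Summable (fun n : ℕ => 1 / ((n : ℝ) * Real.log n ^ p)) := by
  have hp0 : 0 < p := lt_trans one_pos hp
  set f : ℕ → ℝ := fun n => 1 / (((n : ℝ) + 1) * Real.log ((n : ℝ) + 1) ^ p) with hf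
  have hfnn : ∀ n, 0 ≤ f n := fun n => by
    apply div_nonneg zero_le_one
    have : (0:ℝ) ≤ (n:ℝ) + 1 := by positivity
    exact mul_nonneg this (Real.rpow_nonneg (Real.log_nonneg (by linarith)) p)
  have hmono : ∀ ⦃m n : ℕ⦄, 0 < m → m ≤ n → f n ≤ f m := by
    intro m n hm hmn
    have h2 : (2:ℝ) ≤ (m:ℝ) + 1 := by
      have h1 : (1:ℝ) ≤ (m:ℝ) := Nat.one_le_cast.mpr hm
      linarith
    have hmn' : (m:ℝ) + 1 ≤ (n:ℝ) + 1 := by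
      have : (m:ℝ) ≤ (n:ℝ) := Nat.cast_le.mpr hmn
      linarith
    have hlogm : 0 < Real.log ((m:ℝ)+1) := Real.log_pos (by linarith)
    have hpos : 0 < ((m:ℝ)+1) * Real.log ((m:ℝ)+1) ^ p := by
      apply mul_pos (by linarith) (Real.rpow_pos_of_pos hlogm p)
    apply one_div_le_one_div_of_le hpos
    apply mul_le_mul hmn'
    · exact Real.rpow_le_rpow hlogm.le (Real.log_le_log (by linarith) hmn') hp0.le
    · exact Real.rpow_nonneg hlogm.le p
    · linarith
  have hlog2 : 0 < Real.log 2 := Real.log_pos one_lt_two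
  have hcond : Summable (fun n : ℕ => (2:ℝ) ^ n * f (2 ^ n)) := by
    apply (summable_nat_add_iff 1).mp
    have hbase : Summable (fun n : ℕ => (Real.log 2)⁻¹ ^ p * (1 / ((n:ℝ) + 1) ^ p)) := by
      apply Summable.mul_left
      have h0 : Summable (fun n : ℕ => 1 / ((n:ℝ)) ^ p) := Real.summable_one_div_nat_rpow.mpr hp
      have h1 := (summable_nat_add_iff 1).mpr h0
      convert h1 using 2 with n
      case e'_3 => rfl
      push_cast
      ring_nf
    apply Summable.of_nonneg_of_le _ _ hbase
    · intro n
      exact mul_nonneg (by positivity) (hfnn _)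
    · intro n
      have hB : (((2:ℕ) ^ (n+1) : ℕ) : ℝ) = (2:ℝ) ^ (n+1) := by push_cast; ring
      have hq : (0:ℝ) < ((n:ℝ) + 1) * Real.log 2 := by positivity
      have hBpos : (0:ℝ) < (2:ℝ) ^ (n+1) := by positivity
      have hlogB : ((n:ℝ) + 1) * Real.log 2 ≤ Real.log ((2:ℝ) ^ (n+1) + 1) := by
        have e : Real.log ((2:ℝ) ^ (n+1)) = ((n+1 : ℕ) : ℝ) * Real.log 2 := Real.log_pow (2:ℝ) (n+1)
        have : Real.log ((2:ℝ) ^ (n+1)) ≤ Real.log ((2:ℝ) ^ (n+1) + 1) :=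
          Real.log_le_log hBpos (by linarith)
        push_cast at e
        linarith
      have hden : (2:ℝ) ^ (n+1) * (((n:ℝ) + 1) * Real.log 2) ^ p ≤
          ((2:ℝ) ^ (n+1) + 1) * Real.log ((2:ℝ) ^ (n+1) + 1) ^ p := by
        apply mul_le_mul (by linarith)
        · exact Real.rpow_le_rpow hq.le hlogB hp0.le
        · exact Real.rpow_nonneg hq.le p
        · positivity
      have hdpos : (0:ℝ) < (2:ℝ) ^ (n+1) * (((n:ℝ) + 1) * Real.log 2) ^ p := by
        exact mul_pos hBpos (Real.rpow_pos_of_pos hq p)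
      calc (2:ℝ) ^ (n+1) * f (2 ^ (n+1))
          = (2:ℝ) ^ (n+1) * (1 / (((2:ℝ) ^ (n+1) + 1) * Real.log ((2:ℝ) ^ (n+1) + 1) ^ p)) := by
            rw [hf]; simp only; rw [hB]
        _ ≤ (2:ℝ) ^ (n+1) * (1 / ((2:ℝ) ^ (n+1) * (((n:ℝ) + 1) * Real.log 2) ^ p)) := by
            apply mul_le_mul_of_nonneg_left _ hBpos.le
            exact one_div_le_one_div_of_le hdpos hden
        _ = 1 / (((n:ℝ) + 1) * Real.log 2) ^ p := by
            field_simp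
        _ = (Real.log 2)⁻¹ ^ p * (1 / ((n:ℝ) + 1) ^ p) := by
            rw [Real.mul_rpow (by positivity) hlog2.le, Real.inv_rpow hlog2.le]
            field_simp
  have hsf : Summable f := (summable_condensed_iff_of_nonneg hfnn hmono).mp hcond
  apply (summable_nat_add_iff 1).mp
  convert hsf using 2 with n
  case e'_3 => rfl
  simp only [hf]
  push_cast
  ring_nf

set_option maxHeartbeats 1000000 in
/-- Borosh–Fraenkel lower bound: for every `ε > 0`, for Lebesgue-almost every
real `α` there is a constant `c > 0` such that
`|α - a/b²| < c / (b³ (log b)^{1+ε})` has no integer solutions with `b ≥ 2`. -/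
theorem borosh_fraenkel (ε : ℝ) (hε : 0 < ε) :
    ∀ᵐ α ∂(volume : Measure ℝ), ∃ c : ℝ, 0 < c ∧
      ∀ a b : ℤ, 2 ≤ b →
        ¬ |α - (a : ℝ) / (b : ℝ) ^ 2| <
            c / ((b : ℝ) ^ 3 * Real.log (b : ℝ) ^ (1 + ε : ℝ)) := by
  set p : ℝ := 1 + ε with hpdef
  have hp : 1 < p := by simp [hpdef]; linarith
  have hp0 : 0 < p := lt_trans one_pos hp
  have hlog2 : 0 < Real.log 2 := Real.log_pos one_lt_two
  have hlognn : ∀ b : ℕ, 0 ≤ Real.log b := fun b => Real.log_natCast_nonneg b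
  -- the summable majorant
  set u : ℕ → ℝ := fun b => 1 / ((b : ℝ) * Real.log b ^ p) with hu
  have hSu : Summable u := bertrand_summable hp
  have hunn : ∀ b, 0 ≤ u b := fun b => by
    apply div_nonneg zero_le_one
    exact mul_nonneg (Nat.cast_nonneg b) (Real.rpow_nonneg (hlognn b) p)
  set C0 : ℝ := ∑' b, u b with hC0
  have hC0nn : 0 ≤ C0 := tsum_nonneg hunn
  -- a uniform bound on the radii
  obtain ⟨K, hK⟩ := exists_nat_ge (1 / (8 * Real.log 2 ^ p))
  rw [ae_iff]
  set Bad : Set ℝ := {α | ¬ ∃ c : ℝ, 0 < c ∧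
      ∀ a b : ℤ, 2 ≤ b →
        ¬ |α - (a : ℝ) / (b : ℝ) ^ 2| <
            c / ((b : ℝ) ^ 3 * Real.log (b : ℝ) ^ p)} with hBad
  show volume Bad = 0
  have hcover : Bad ⊆ ⋃ M : ℕ, Bad ∩ Set.Icc (-(M:ℝ)) (M:ℝ) := by
    intro α hα
    obtain ⟨M, hM⟩ := exists_nat_ge |α|
    exact Set.mem_iUnion.mpr ⟨M, hα, abs_le.mp hM |>.1, (abs_le.mp hM).2⟩
  refine measure_mono_null hcover (measure_iUnion_null fun M => ?_)
  -- fix M; set up the covering sets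
  set r : ℕ → ℕ → ℝ := fun n b =>
    (1 / ((n:ℝ) + 1)) / ((b : ℝ) ^ 3 * Real.log b ^ p) with hr
  set N : ℕ → ℤ := fun b => (b : ℤ) ^ 2 * ((M : ℤ) + K) with hN
  have hNnn : ∀ b, 0 ≤ N b := fun b => by positivity
  set E : ℕ → Set ℝ := fun n =>
    ⋃ (b : ℕ), ⋃ a ∈ Finset.Icc (-(N b)) (N b),
      Metric.ball ((a : ℝ) / (b : ℝ) ^ 2) (r n b) with hE
  have hrnn : ∀ n b, 0 ≤ r n b := fun n b => by
    apply div_nonneg (by positivity)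
    exact mul_nonneg (by positivity) (Real.rpow_nonneg (hlognn b) p)
  -- Step 1 : inclusion
  have hincl : ∀ n : ℕ, Bad ∩ Set.Icc (-(M:ℝ)) (M:ℝ) ⊆ E n := by
    intro n α ⟨hα, hIcc⟩
    rw [hBad, Set.mem_setOf_eq] at hα
    push_neg at hα
    obtain ⟨a, b, hb2, hlt⟩ := hα (1 / ((n:ℝ) + 1)) (by positivity)
    set b' : ℕ := b.toNat with hb'
    have hbb' : (b : ℝ) = (b' : ℝ) := by
      rw [hb']
      norm_cast
      omega
    have hb'2 : 2 ≤ b' := by omega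
    have hb'2R : (2:ℝ) ≤ (b':ℝ) := by exact_mod_cast hb'2
    have hlt' : |α - (a : ℝ) / (b' : ℝ) ^ 2| < r n b' := by
      rw [hbb'] at hlt
      exact hlt
    have hLpos : 0 < Real.log (b') ^ p :=
      Real.rpow_pos_of_pos (Real.log_pos (by linarith)) p
    have hL2 : Real.log 2 ^ p ≤ Real.log (b') ^ p :=
      Real.rpow_le_rpow hlog2.le (Real.log_le_log two_pos hb'2R) hp0.le
    have hb3 : (8:ℝ) ≤ (b':ℝ) ^ 3 := by nlinarith
    have hrK : r n b' ≤ (K : ℝ) := by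
      have h1 : r n b' ≤ 1 / (8 * Real.log 2 ^ p) := by
        show (1 / ((n:ℝ) + 1)) / ((b' : ℝ) ^ 3 * Real.log b' ^ p) ≤ _
        apply div_le_div₀ zero_le_one _ (by positivity) _
        · rw [div_le_one (by positivity)]; linarith
        · nlinarith
      linarith
    have hαM : |α| ≤ (M : ℝ) := abs_le.mpr ⟨hIcc.1, hIcc.2⟩
    have hb'sq : (0:ℝ) < (b':ℝ) ^ 2 := by positivity
    have habs : |(a:ℝ)| / (b':ℝ) ^ 2 < (M:ℝ) + K := by
      have h1 : |(a:ℝ) / (b':ℝ)^2| ≤ |α| + |α - (a:ℝ)/(b':ℝ)^2| := by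
        have := abs_sub_abs_le_abs_sub ((a:ℝ)/(b':ℝ)^2) α
        rw [abs_sub_comm] at this
        linarith
      rw [abs_div, abs_of_pos hb'sq] at h1
      calc |(a:ℝ)| / (b':ℝ)^2 ≤ |α| + |α - (a:ℝ)/(b':ℝ)^2| := h1
        _ < (M:ℝ) + K := by
            have := lt_of_lt_of_le hlt' hrK
            linarith
    have haN : a ∈ Finset.Icc (-(N b')) (N b') := by
      rw [Finset.mem_Icc, ← abs_le]
      have h2 : (|a| : ℝ) < ((N b' : ℤ) : ℝ) := by
        rw [hN]
        push_cast [Int.cast_abs]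
        calc |(a:ℝ)| = (|(a:ℝ)| / (b':ℝ)^2) * (b':ℝ)^2 := by field_simp
          _ < ((M:ℝ) + K) * (b':ℝ)^2 := by
              exact mul_lt_mul_of_pos_right habs hb'sq
          _ = (b':ℝ)^2 * ((M:ℝ) + K) := by ring
      exact le_of_lt (by exact_mod_cast h2)
    simp only [hE]
    refine Set.mem_iUnion.mpr ⟨b', Set.mem_biUnion haN ?_⟩
    rw [Metric.mem_ball, Real.dist_eq]
    exact hlt'
  -- Step 2 : measure bound
  set C : ℝ := 4 * ((M:ℝ) + K + 1) * C0 with hC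
  have hCnn : 0 ≤ C := by positivity
  set t : ℕ → ℕ → ℝ := fun n b => (2 * ((N b : ℤ) : ℝ) + 1) * (2 * r n b) with ht
  have htnn : ∀ n b, 0 ≤ t n b := fun n b => by
    apply mul_nonneg _ (by linarith [hrnn n b])
    have := hNnn b
    have : (0:ℝ) ≤ ((N b : ℤ) : ℝ) := by exact_mod_cast this
    linarith
  have htu : ∀ n b, t n b ≤ (1 / ((n:ℝ)+1)) * (4 * ((M:ℝ) + K + 1) * u b) := by
    intro n b
    rcases lt_or_ge b 2 with hb | hb
    · -- b = 0 or 1 : r n b = 0 and u b = 0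
      have hr0 : r n b = 0 := by
        interval_cases b
        · simp [hr]
        · simp [hr, Real.log_one, Real.zero_rpow hp0.ne']
      have hu0 : u b = 0 := by
        interval_cases b
        · simp [hu]
        · simp [hu, Real.log_one, Real.zero_rpow hp0.ne']
      simp [ht, hr0, hu0]
    · have hbR : (2:ℝ) ≤ (b:ℝ) := by exact_mod_cast hb
      have hLpos : 0 < Real.log b ^ p :=
        Real.rpow_pos_of_pos (Real.log_pos (by linarith)) p
      have hbpos : (0:ℝ) < (b:ℝ) := by linarith
      have hNcast : ((N b : ℤ) : ℝ) = (b:ℝ)^2 * ((M:ℝ) + K) := by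
        rw [hN]; push_cast; ring
      have hrval : r n b = (1 / ((n:ℝ) + 1)) / ((b : ℝ) ^ 3 * Real.log b ^ p) := rfl
      have hkey : (2 * ((b:ℝ)^2 * ((M:ℝ) + K)) + 1) * 2 ≤ 4 * ((M:ℝ) + K + 1) * (b:ℝ)^2 := by
        nlinarith [Nat.cast_nonneg (α := ℝ) M, Nat.cast_nonneg (α := ℝ) K]
      simp only [ht, hu]
      rw [hNcast, hrval]
      rw [show (2 * ((b:ℝ)^2 * ((M:ℝ) + K)) + 1) *
            (2 * ((1/((n:ℝ)+1)) / ((b:ℝ)^3 * Real.log b ^ p))) =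
          ((2 * ((b:ℝ)^2 * ((M:ℝ)+K)) + 1) * 2 * (1/((n:ℝ)+1))) /
            ((b:ℝ)^3 * Real.log b ^ p) from by ring]
      rw [show (1/((n:ℝ)+1)) * (4 * ((M:ℝ)+K+1) * (1 / ((b:ℝ) * Real.log b ^ p))) =
          (4 * ((M:ℝ)+K+1) * (1/((n:ℝ)+1))) / ((b:ℝ) * Real.log b ^ p) from by ring]
      have hd1 : (0:ℝ) < (b:ℝ)^3 * Real.log b ^ p := by
        apply mul_pos (by positivity) hLpos
      have hd2 : (0:ℝ) < (b:ℝ) * Real.log b ^ p := mul_pos hbpos hLpos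
      rw [div_le_div_iff₀ hd1 hd2]
      have hX : (0:ℝ) ≤ (1/((n:ℝ)+1)) * ((b:ℝ) * Real.log b ^ p) := by
        apply mul_nonneg (by positivity) hd2.le
      nlinarith [mul_le_mul_of_nonneg_right hkey hX]
  have htsummable : ∀ n, Summable (t n) := by
    intro n
    apply Summable.of_nonneg_of_le (htnn n) (htu n)
    exact (hSu.mul_left _).mul_left _
  have htsum : ∀ n, ∑' b, t n b ≤ (1 / ((n:ℝ)+1)) * C := by
    intro n
    calc ∑' b, t n b ≤ ∑' b, (1 / ((n:ℝ)+1)) * (4 * ((M:ℝ) + K + 1) * u b) :=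
          Summable.tsum_le_tsum (htu n) (htsummable n) ((hSu.mul_left _).mul_left _)
      _ = (1 / ((n:ℝ)+1)) * (4 * ((M:ℝ) + K + 1)) * C0 := by
          rw [hC0]
          rw [← tsum_mul_left]
          congr 1 with b
          ring
      _ = (1 / ((n:ℝ)+1)) * C := by rw [hC]; ring
  have hEbound : ∀ n : ℕ, volume (E n) ≤ ENNReal.ofReal ((1 / ((n:ℝ)+1)) * C) := by
    intro n
    have h1 : volume (E n) ≤ ∑' b : ℕ, ENNReal.ofReal (t n b) := by
      simp only [hE]
      refine le_trans (measure_iUnion_le _) (ENNReal.tsum_le_tsum fun b => ?_)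
      calc volume (⋃ a ∈ Finset.Icc (-(N b)) (N b),
              Metric.ball ((a : ℝ) / (b : ℝ) ^ 2) (r n b))
          ≤ ∑ a ∈ Finset.Icc (-(N b)) (N b),
              volume (Metric.ball ((a : ℝ) / (b : ℝ) ^ 2) (r n b)) :=
            measure_biUnion_finset_le _ _
        _ = (Finset.Icc (-(N b)) (N b)).card • ENNReal.ofReal (2 * r n b) := by
            simp [Real.volume_ball]
        _ = ((Finset.Icc (-(N b)) (N b)).card : ℝ≥0∞) * ENNReal.ofReal (2 * r n b) := by
            rw [nsmul_eq_mul]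
        _ ≤ ENNReal.ofReal (2 * ((N b : ℤ) : ℝ) + 1) * ENNReal.ofReal (2 * r n b) := by
            apply mul_le_mul_left
            rw [Int.card_Icc]
            rw [← ENNReal.ofReal_natCast]
            apply ENNReal.ofReal_le_ofReal
            have hnn2 : (0:ℤ) ≤ 2 * N b + 1 := by have := hNnn b; omega
            have h2 : ((2 * N b + 1).toNat : ℝ) = ((2 * N b + 1 : ℤ) : ℝ) := by
              exact_mod_cast Int.toNat_of_nonneg hnn2
            have h3 : (N b + 1 - -(N b)) = 2 * N b + 1 := by ring
            rw [h3, h2]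
            push_cast
            try linarith
        _ = ENNReal.ofReal (t n b) := by
            rw [← ENNReal.ofReal_mul (by
              have := hNnn b
              have : (0:ℝ) ≤ ((N b : ℤ) : ℝ) := by exact_mod_cast this
              linarith)]
    calc volume (E n) ≤ ∑' b : ℕ, ENNReal.ofReal (t n b) := h1
      _ = ENNReal.ofReal (∑' b, t n b) :=
          (ENNReal.ofReal_tsum_of_nonneg (htnn n) (htsummable n)).symm
      _ ≤ ENNReal.ofReal ((1 / ((n:ℝ)+1)) * C) := ENNReal.ofReal_le_ofReal (htsum n)
  -- Step 3 : limit
  have htend : Filter.Tendsto (fun n : ℕ => ENNReal.ofReal ((1 / ((n:ℝ)+1)) * C))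
      Filter.atTop (nhds 0) := by
    have hreal : Filter.Tendsto (fun n : ℕ => (1 / ((n:ℝ)+1)) * C) Filter.atTop (nhds 0) := by
      have := tendsto_one_div_add_atTop_nhds_zero_nat.mul_const C
      simpa using this
    have h2 := ENNReal.tendsto_ofReal hreal
    rwa [ENNReal.ofReal_zero] at h2
  have hle : volume (Bad ∩ Set.Icc (-(M:ℝ)) (M:ℝ)) ≤ 0 := by
    apply ge_of_tendsto' htend
    intro n
    exact le_trans (measure_mono (hincl n)) (hEbound n)
  exact le_antisymm hle zero_le
end
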